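/- Let p ≥ 5 be a prime, and suppose N ≥ 1, g ≥ 2, h ≥ 0 are integers, each period m_i is a power of p (m_i ≥ p), 2(g-1) = N(2h - 2 + Σ_{i=1}^l(1 - 1/m_i)), and d := 3h - 3 + l ≥ 1. Let λ be the residue of d modulo 3 (λ ∈ {0,1,2}). Then N ≤ 2(g-1)/((2/3)d + λ(1/3 - 1/p)). -/

import Mathlib

/-- For a prime p ≥ 5, a p-group of order N acting with all periods powers
of p (≥ p), Riemann–Hurwitz, and dimension d = 3h - 3 + l ≥ 1, satisfies
N ≤ 2(g-1)/((2/3)d + λ(1/3 - 1/p)) where λ = d mod 3. -/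
theorem p_group_bound (p N g d h l : ℕ) (m : Fin l → ℕ)
    (hp : p.Prime) (hp5 : 5 ≤ p)
    (hN : 1 ≤ N) (hg : 2 ≤ g)
    (hmp : ∀ i, p ≤ m i) (hmpow : ∀ i, ∃ k : ℕ, m i = p ^ k)
    (hd : 1 ≤ d) (hdim : 3 * (h : ℤ) - 3 + l = d)
    (hRH : 2 * ((g : ℚ) - 1) = N * (2 * (h : ℚ) - 2 + ∑ i, (1 - 1 / (m i : ℚ)))) :
    (N : ℚ) ≤ 2 * ((g : ℚ) - 1) /
      ((2 / 3) * (d : ℚ) + ((d % 3 : ℕ) : ℚ) * (1 / 3 - 1 / (p : ℚ))) := by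
  have hp0 : (0:ℚ) < p := by
    have : (5:ℚ) ≤ p := by exact_mod_cast hp5
    linarith
  have hp5Q : (5:ℚ) ≤ p := by exact_mod_cast hp5
  have hsub : (0:ℚ) ≤ 1/3 - 1/p := by
    have : (1:ℚ)/p ≤ 1/3 := by
      apply one_div_le_one_div_of_le <;> norm_num <;> linarith
    linarith
  have hlaml : d % 3 ≤ l := by omega
  have hlamlQ : ((d % 3 : ℕ) : ℚ) ≤ l := by exact_mod_cast hlaml
  have hlam0 : (0:ℚ) ≤ ((d % 3 : ℕ) : ℚ) := by positivity
  have hdQ : (d:ℚ) = 3*(h:ℚ) - 3 + l := by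
    have := hdim
    push_cast at this ⊢
    exact_mod_cast this.symm
  have hd1 : (1:ℚ) ≤ d := by exact_mod_cast hd
  have hDpos : 0 < (2 / 3) * (d : ℚ) + ((d % 3 : ℕ) : ℚ) * (1 / 3 - 1 / (p : ℚ)) := by
    nlinarith
  rw [le_div_iff₀ hDpos]
  rw [hRH]
  have hNQ : (0:ℚ) ≤ N := by positivity
  apply mul_le_mul_of_nonneg_left _ hNQ
  have hsum : (l:ℚ) * (1 - 1/p) ≤ ∑ i, (1 - 1 / (m i : ℚ)) := by
    calc (l:ℚ) * (1 - 1/p) = ∑ _i : Fin l, (1 - 1/(p:ℚ)) := by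
          simp [Finset.sum_const, mul_comm]; ring
      _ ≤ ∑ i, (1 - 1 / (m i : ℚ)) := by
          apply Finset.sum_le_sum
          intro i _
          have hmi : (p:ℚ) ≤ m i := by exact_mod_cast hmp i
          have : (1:ℚ)/(m i) ≤ 1/p := one_div_le_one_div_of_le hp0 hmi
          linarith
  nlinarith [mul_le_mul_of_nonneg_right hlamlQ hsub]
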